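/- Let H be a real Hilbert space and suppose H₁, H₂ : H → H have bounded incremental gain and strictly separated SRGs, i.e. there exists r_min > 0 such that dist(SRG(H₁)⁻¹, −τ·chord(SRG(H₂))) ≥ r_min for all τ ∈ (0, 1]. Then the feedback interconnection [H₁, H₂] maps all of H to H (for every u there is a unique pair (e, y) with e = u − H₂(y), y = H₁(e)) and has bounded incremental gain. -/

import Mathlib

/-!
**Statement 8** (SRG separation implies incremental stability).  Let `H₁, H₂ : H → H`
have bounded incremental gain and strictly separated SRGs, i.e. there is `r_min > 0`
with `dist(SRG(H₁)⁻¹, -τ·chord(SRG(H₂))) ≥ r_min` for all `τ ∈ (0, 1]`.  Then the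
feedback interconnection `[H₁, H₂]` maps all of `H` to `H` (for every `u` there is a
unique pair `(e, y)` with `e = u - H₂ y`, `y = H₁ e`) and has bounded incremental gain.

The separation hypothesis is expressed pointwise; a point `z = 0` of `SRG(H₁)` inverts
to `∞`, at infinite distance from every finite point, hence the guard `z ≠ 0`.
-/

open InnerProductGeometry

variable {H : Type*} [NormedAddCommGroup H] [InnerProductSpace ℝ H]

/-- The Scaled Relative Graph of a relation `R ⊆ H × H` (finite part). -/
noncomputable def srg (R : Set (H × H)) : Set ℂ :=
  {w | ∃ u₁ y₁ u₂ y₂, (u₁, y₁) ∈ R ∧ (u₂, y₂) ∈ R ∧ u₁ ≠ u₂ ∧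
    (w = (‖y₁ - y₂‖ / ‖u₁ - u₂‖ : ℝ) *
        Complex.exp (Complex.I * (angle (u₁ - u₂) (y₁ - y₂) : ℝ)) ∨
     w = (‖y₁ - y₂‖ / ‖u₁ - u₂‖ : ℝ) *
        Complex.exp (-(Complex.I * (angle (u₁ - u₂) (y₁ - y₂) : ℝ))))}

/-- The chord property for a set of complex numbers. -/
def ChordProperty (G : Set ℂ) : Prop :=
  ∀ z ∈ G, ∀ l ∈ Set.Icc (0 : ℝ) 1,
    (l : ℂ) * z + (1 - (l : ℂ)) * (starRingEnd ℂ) z ∈ G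

/-- The chord-property closure: the smallest superset with the chord property. -/
def chordClosure (G : Set ℂ) : Set ℂ := ⋂₀ {S | G ⊆ S ∧ ChordProperty S}

/-- The graph of an operator. -/
def graphOf (F : H → H) : Set (H × H) := {p | p.2 = F p.1}

open RealInnerProductSpace in
private lemma key_cs_aux (e y v : H) :
    ⟪e, y⟫ * ⟪y, v⟫ -
      Real.sqrt (⟪e, e⟫ * ⟪y, y⟫ - ⟪e, y⟫ * ⟪e, y⟫) *
      Real.sqrt (⟪y, y⟫ * ⟪v, v⟫ - ⟪y, v⟫ * ⟪y, v⟫) ≤ ⟪y, y⟫ * ⟪e, v⟫ := by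
  by_cases hy : y = 0
  · simp [hy]
  · set e' : H := ⟪y, y⟫ • e - ⟪e, y⟫ • y with he'
    set v' : H := ⟪y, y⟫ • v - ⟪y, v⟫ • y with hv'
    have hyy : (0:ℝ) < ⟪y, y⟫ := by
      have h0 : 0 < ‖y‖ := norm_pos_iff.2 hy
      rw [real_inner_self_eq_norm_mul_norm]
      exact mul_pos h0 h0
    have hA : ⟪e', e'⟫ = ⟪y, y⟫ * (⟪e, e⟫ * ⟪y, y⟫ - ⟪e, y⟫ * ⟪e, y⟫) := by
      simp only [he', inner_sub_left, inner_sub_right, real_inner_smul_left,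
        real_inner_smul_right, real_inner_comm y e]
      ring
    have hB : ⟪v', v'⟫ = ⟪y, y⟫ * (⟪y, y⟫ * ⟪v, v⟫ - ⟪y, v⟫ * ⟪y, v⟫) := by
      simp only [hv', inner_sub_left, inner_sub_right, real_inner_smul_left,
        real_inner_smul_right, real_inner_comm v y]
      ring
    have hC : ⟪e', v'⟫ = ⟪y, y⟫ * (⟪y, y⟫ * ⟪e, v⟫ - ⟪e, y⟫ * ⟪y, v⟫) := by
      simp only [he', hv', inner_sub_left, inner_sub_right, real_inner_smul_left,
        real_inner_smul_right, real_inner_comm v y, real_inner_comm y e]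
      ring
    have hcs : -(‖e'‖ * ‖v'‖) ≤ ⟪e', v'⟫ :=
      (neg_le_neg (abs_real_inner_le_norm e' v')).trans (neg_abs_le _)
    have hnorm : ‖e'‖ * ‖v'‖ = ⟪y, y⟫ * (Real.sqrt (⟪e, e⟫ * ⟪y, y⟫ - ⟪e, y⟫ * ⟪e, y⟫) *
        Real.sqrt (⟪y, y⟫ * ⟪v, v⟫ - ⟪y, v⟫ * ⟪y, v⟫)) := by
      have h1 : ‖e'‖ = Real.sqrt ⟪e', e'⟫ := by
        rw [real_inner_self_eq_norm_mul_norm, Real.sqrt_mul_self (norm_nonneg _)]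
      have h2 : ‖v'‖ = Real.sqrt ⟪v', v'⟫ := by
        rw [real_inner_self_eq_norm_mul_norm, Real.sqrt_mul_self (norm_nonneg _)]
      rw [h1, h2, hA, hB, Real.sqrt_mul hyy.le, Real.sqrt_mul hyy.le]
      have hs : Real.sqrt ⟪y, y⟫ * Real.sqrt ⟪y, y⟫ = ⟪y, y⟫ := Real.mul_self_sqrt hyy.le
      linear_combination (Real.sqrt (⟪e, e⟫ * ⟪y, y⟫ - ⟪e, y⟫ * ⟪e, y⟫) *
        Real.sqrt (⟪y, y⟫ * ⟪v, v⟫ - ⟪y, v⟫ * ⟪y, v⟫)) * hs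
    rw [hnorm, hC] at hcs
    nlinarith [hcs, hyy]

private lemma subset_chordClosure (G : Set ℂ) : G ⊆ chordClosure G :=
  fun _ hx => Set.mem_sInter.2 fun _ hS => hS.1 hx

open RealInnerProductSpace in
private lemma star_ineq (H₁ H₂ : H → H) (rmin : ℝ) (hrmin : 0 < rmin)
    (hsep : ∀ τ ∈ Set.Ioc (0 : ℝ) 1, ∀ z ∈ srg (graphOf H₁), z ≠ 0 →
      ∀ w ∈ chordClosure (srg (graphOf H₂)),
        rmin ≤ ‖z⁻¹ - (-((τ : ℂ) * w))‖)
    (τ : ℝ) (hτ : τ ∈ Set.Ioc (0:ℝ) 1) (e₁ e₂ : H) :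
    rmin * ‖H₁ e₁ - H₁ e₂‖ ≤ ‖(e₁ - e₂) + τ • (H₂ (H₁ e₁) - H₂ (H₁ e₂))‖ := by
  by_cases hyy : H₁ e₁ = H₁ e₂
  · simp only [hyy, sub_self, norm_zero, mul_zero]
    exact norm_nonneg _
  have hee : e₁ ≠ e₂ := fun h => hyy (by rw [h])
  set Δe : H := e₁ - e₂ with hΔe
  set Δy : H := H₁ e₁ - H₁ e₂ with hΔy
  set Δv : H := H₂ (H₁ e₁) - H₂ (H₁ e₂) with hΔv
  set a : ℝ := ‖Δe‖ with ha
  set b : ℝ := ‖Δy‖ with hb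
  set d : ℝ := ‖Δv‖ with hd
  have hapos : 0 < a := by rw [ha]; exact norm_sub_pos_iff.2 hee
  have hbpos : 0 < b := by rw [hb]; exact norm_sub_pos_iff.2 hyy
  have hdnn : 0 ≤ d := norm_nonneg _
  set θ : ℝ := angle Δe Δy with hθ
  set φ : ℝ := angle Δy Δv with hφ
  set z : ℂ := ((b / a : ℝ) : ℂ) * Complex.exp (Complex.I * (θ : ℝ)) with hz
  set w₀ : ℂ := ((d / b : ℝ) : ℂ) * Complex.exp (Complex.I * (φ : ℝ)) with hw₀
  have hzmem : z ∈ srg (graphOf H₁) :=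
    ⟨e₁, H₁ e₁, e₂, H₁ e₂, rfl, rfl, hee, Or.inl rfl⟩
  have hz0 : z ≠ 0 :=
    mul_ne_zero (Complex.ofReal_ne_zero.2 (by positivity)) (Complex.exp_ne_zero _)
  have hwmem : w₀ ∈ chordClosure (srg (graphOf H₂)) :=
    subset_chordClosure _ ⟨H₁ e₁, H₂ (H₁ e₁), H₁ e₂, H₂ (H₁ e₂), rfl, rfl, hyy, Or.inl rfl⟩
  have h := hsep τ hτ z hzmem hz0 w₀ hwmem
  rw [sub_neg_eq_add] at h
  have hzinv : z⁻¹ = ((a / b : ℝ) : ℂ) * Complex.exp (-(Complex.I * (θ : ℝ))) := by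
    symm
    apply eq_inv_of_mul_eq_one_left
    rw [hz, mul_mul_mul_comm, ← Complex.exp_add, neg_add_cancel, Complex.exp_zero, mul_one]
    norm_cast
    field_simp
  set X : ℂ := (b : ℂ) * (z⁻¹ + (τ : ℂ) * w₀) with hX
  have hXeq : X = (a : ℂ) * Complex.exp (-(Complex.I * (θ : ℝ)))
      + ((τ : ℝ) : ℂ) * ((d : ℝ) : ℂ) * Complex.exp (Complex.I * (φ : ℝ)) := by
    rw [hX, hzinv, hw₀, mul_add]
    have hb0 : (b : ℂ) ≠ 0 := by exact_mod_cast hbpos.ne'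
    have h1 : (b : ℂ) * ((a / b : ℝ) : ℂ) = (a : ℂ) := by
      push_cast; field_simp
    have h2 : (b : ℂ) * ((τ : ℂ) * (((d / b : ℝ) : ℂ) * Complex.exp (Complex.I * (φ : ℝ))))
        = ((τ : ℝ) : ℂ) * ((d : ℝ) : ℂ) * Complex.exp (Complex.I * (φ : ℝ)) := by
      push_cast; field_simp
    rw [← mul_assoc, h1, h2]
  have habs : rmin * b ≤ ‖X‖ := by
    rw [hX, norm_mul, Complex.norm_real, Real.norm_eq_abs, abs_of_pos hbpos, mul_comm]
    exact mul_le_mul_of_nonneg_left h hbpos.le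
  have hXre : X.re = a * Real.cos θ + τ * d * Real.cos φ := by
    rw [hXeq]
    simp [Complex.exp_re, Complex.exp_im, Complex.mul_re, Complex.mul_im]
  have hXim : X.im = τ * d * Real.sin φ - a * Real.sin θ := by
    rw [hXeq]
    simp [Complex.exp_re, Complex.exp_im, Complex.mul_re, Complex.mul_im]
    ring
  have hX2 : (‖X‖)^2 = (a * Real.cos θ + τ * d * Real.cos φ)^2
      + (τ * d * Real.sin φ - a * Real.sin θ)^2 := by
    rw [Complex.sq_norm, Complex.normSq_apply, hXre, hXim]; ring
  have hK : (Real.cos θ * (a * b)) * (Real.cos φ * (b * d))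
      - (Real.sin θ * (a * b)) * (Real.sin φ * (b * d)) ≤ ⟪Δy, Δy⟫ * ⟪Δe, Δv⟫ := by
    rw [hθ, hφ, ha, hb, hd, cos_angle_mul_norm_mul_norm, cos_angle_mul_norm_mul_norm,
      sin_angle_mul_norm_mul_norm, sin_angle_mul_norm_mul_norm]
    exact key_cs_aux Δe Δy Δv
  have hK2 : a * d * (Real.cos θ * Real.cos φ - Real.sin θ * Real.sin φ) ≤ ⟪Δe, Δv⟫ := by
    rw [real_inner_self_eq_norm_mul_norm, ← hb] at hK
    nlinarith [hK, mul_pos hbpos hbpos]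
  have hrhs : ‖Δe + τ • Δv‖^2 = a^2 + 2 * (τ * ⟪Δe, Δv⟫) + (τ * d)^2 := by
    rw [norm_add_sq_real, real_inner_smul_right, norm_smul, Real.norm_eq_abs,
      abs_of_pos hτ.1, ha, hd]
  have hmul : 2 * τ * (a * d * (Real.cos θ * Real.cos φ - Real.sin θ * Real.sin φ))
      ≤ 2 * τ * ⟪Δe, Δv⟫ :=
    mul_le_mul_of_nonneg_left hK2 (by linarith [hτ.1])
  have id1 : Real.sin θ^2 + Real.cos θ^2 = 1 := Real.sin_sq_add_cos_sq θ
  have id2 : Real.sin φ^2 + Real.cos φ^2 = 1 := Real.sin_sq_add_cos_sq φ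
  have hfinal : (rmin * b)^2 ≤ ‖Δe + τ • Δv‖^2 := by
    calc (rmin * b)^2 ≤ (‖X‖)^2 :=
          pow_le_pow_left₀ (by positivity) habs 2
      _ = (a * Real.cos θ + τ * d * Real.cos φ)^2
          + (τ * d * Real.sin φ - a * Real.sin θ)^2 := hX2
      _ = a^2 * (Real.sin θ^2 + Real.cos θ^2) + (τ*d)^2 * (Real.sin φ^2 + Real.cos φ^2)
          + 2 * τ * (a * d * (Real.cos θ * Real.cos φ - Real.sin θ * Real.sin φ)) := by ring
      _ = a^2 + (τ*d)^2
          + 2 * τ * (a * d * (Real.cos θ * Real.cos φ - Real.sin θ * Real.sin φ)) := by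
          rw [id1, id2]; ring
      _ ≤ a^2 + (τ*d)^2 + 2 * τ * ⟪Δe, Δv⟫ := by linarith [hmul]
      _ = a^2 + 2 * (τ * ⟪Δe, Δv⟫) + (τ*d)^2 := by ring
      _ = ‖Δe + τ • Δv‖^2 := hrhs.symm
  exact le_of_pow_le_pow_left₀ two_ne_zero (norm_nonneg _) hfinal

theorem srg_separation_stability [CompleteSpace H] (H₁ H₂ : H → H)
    (h₁ : ∃ γ₁ : ℝ, ∀ u₁ u₂ : H, ‖H₁ u₁ - H₁ u₂‖ ≤ γ₁ * ‖u₁ - u₂‖)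
    (h₂ : ∃ γ₂ : ℝ, ∀ u₁ u₂ : H, ‖H₂ u₁ - H₂ u₂‖ ≤ γ₂ * ‖u₁ - u₂‖)
    (rmin : ℝ) (hrmin : 0 < rmin)
    (hsep : ∀ τ ∈ Set.Ioc (0 : ℝ) 1, ∀ z ∈ srg (graphOf H₁), z ≠ 0 →
      ∀ w ∈ chordClosure (srg (graphOf H₂)),
        rmin ≤ ‖z⁻¹ - (-((τ : ℂ) * w))‖) :
    (∀ u : H, ∃! p : H × H, p.1 = u - H₂ p.2 ∧ p.2 = H₁ p.1) ∧
    (∃ γ : ℝ, ∀ u₁ e₁ y₁ u₂ e₂ y₂ : H,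
      e₁ = u₁ - H₂ y₁ → y₁ = H₁ e₁ → e₂ = u₂ - H₂ y₂ → y₂ = H₁ e₂ →
      ‖y₁ - y₂‖ ≤ γ * ‖u₁ - u₂‖) := by
  obtain ⟨γ₁, hγ₁⟩ := h₁
  obtain ⟨γ₂, hγ₂⟩ := h₂
  set G : H → H := fun e => H₂ (H₁ e) with hGdef
  have hstar : ∀ τ ∈ Set.Ioc (0:ℝ) 1, ∀ e₁ e₂ : H,
      rmin * ‖H₁ e₁ - H₁ e₂‖ ≤ ‖(e₁ - e₂) + τ • (G e₁ - G e₂)‖ :=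
    fun τ hτ e₁ e₂ => star_ineq H₁ H₂ rmin hrmin hsep τ hτ e₁ e₂
  set g2 : ℝ := max γ₂ 0 with hg2def
  have hg2nn : 0 ≤ g2 := le_max_right _ _
  have hg2 : ∀ u₁ u₂ : H, ‖H₂ u₁ - H₂ u₂‖ ≤ g2 * ‖u₁ - u₂‖ := fun u₁ u₂ =>
    (hγ₂ u₁ u₂).trans (mul_le_mul_of_nonneg_right (le_max_left _ _) (norm_nonneg _))
  set g1 : ℝ := max γ₁ 0 with hg1def
  have hg1 : ∀ u₁ u₂ : H, ‖H₁ u₁ - H₁ u₂‖ ≤ g1 * ‖u₁ - u₂‖ := fun u₁ u₂ =>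
    (hγ₁ u₁ u₂).trans (mul_le_mul_of_nonneg_right (le_max_left _ _) (norm_nonneg _))
  set L : ℝ := g2 * g1 + 1 with hLdef
  have hg1nn : 0 ≤ g1 := le_max_right _ _
  have hLpos : 0 < L := by positivity
  have hGlip : ∀ e₁ e₂ : H, ‖G e₁ - G e₂‖ ≤ L * ‖e₁ - e₂‖ := by
    intro e₁ e₂
    calc ‖G e₁ - G e₂‖ ≤ g2 * ‖H₁ e₁ - H₁ e₂‖ := hg2 _ _
      _ ≤ g2 * (g1 * ‖e₁ - e₂‖) := mul_le_mul_of_nonneg_left (hg1 _ _) hg2nn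
      _ ≤ L * ‖e₁ - e₂‖ := by
          have := norm_nonneg (e₁ - e₂); nlinarith
  set c : ℝ := rmin / (rmin + g2) with hcdef
  have hden : 0 < rmin + g2 := by linarith
  have hcpos : 0 < c := div_pos hrmin hden
  have hc1 : c ≤ 1 := (div_le_one hden).2 (by linarith)
  -- uniform expansiveness of the homotopy
  have hexp : ∀ τ ∈ Set.Icc (0:ℝ) 1, ∀ e₁ e₂ : H,
      c * ‖e₁ - e₂‖ ≤ ‖(e₁ + τ • G e₁) - (e₂ + τ • G e₂)‖ := by
    intro τ hτ e₁ e₂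
    have hT : (e₁ + τ • G e₁) - (e₂ + τ • G e₂) = (e₁ - e₂) + τ • (G e₁ - G e₂) := by
      rw [smul_sub]; abel
    rw [hT]
    rcases eq_or_lt_of_le hτ.1 with h0 | h0
    · rw [← h0, zero_smul, add_zero]
      exact mul_le_of_le_one_left (norm_nonneg _) hc1
    · have hτ' : τ ∈ Set.Ioc (0:ℝ) 1 := ⟨h0, hτ.2⟩
      have h1 := hstar τ hτ' e₁ e₂
      set T : H := (e₁ - e₂) + τ • (G e₁ - G e₂) with hTdef
      have h2 : ‖e₁ - e₂‖ ≤ ‖T‖ + τ * ‖G e₁ - G e₂‖ := by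
        have hsub : e₁ - e₂ = T - τ • (G e₁ - G e₂) := by rw [hTdef]; abel
        calc ‖e₁ - e₂‖ = ‖T - τ • (G e₁ - G e₂)‖ := by rw [← hsub]
          _ ≤ ‖T‖ + ‖τ • (G e₁ - G e₂)‖ := norm_sub_le _ _
          _ = ‖T‖ + τ * ‖G e₁ - G e₂‖ := by
              rw [norm_smul, Real.norm_eq_abs, abs_of_pos h0]
      have h3 : ‖G e₁ - G e₂‖ ≤ g2 * ‖H₁ e₁ - H₁ e₂‖ := hg2 _ _
      have s2 : τ * ‖G e₁ - G e₂‖ ≤ g2 * ‖H₁ e₁ - H₁ e₂‖ := by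
        nlinarith [norm_nonneg (G e₁ - G e₂), hτ'.2]
      rw [hcdef, div_mul_eq_mul_div, div_le_iff₀ hden]
      nlinarith [mul_le_mul_of_nonneg_left h2 hrmin.le,
        mul_le_mul_of_nonneg_left s2 hrmin.le,
        mul_le_mul_of_nonneg_left h1 hg2nn]
  haveI : Nonempty H := ⟨0⟩
  set δ : ℝ := c / (2 * L) with hδdef
  have hδpos : 0 < δ := by positivity
  -- continuation step
  have step : ∀ τ ∈ Set.Icc (0:ℝ) 1, ∀ σ ∈ Set.Icc (0:ℝ) 1, |σ - τ| ≤ δ →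
      Function.Surjective (fun e => e + τ • G e) →
      Function.Surjective (fun e => e + σ • G e) := by
    intro τ hτ σ hσ hdist hsurj u
    set Tinv : H → H := Function.surjInv hsurj with hTinvdef
    have hTinv_eq : ∀ x : H, Tinv x + τ • G (Tinv x) = x := fun x =>
      Function.surjInv_eq hsurj x
    set Φ : H → H := fun e => Tinv (u - (σ - τ) • G e) with hΦdef
    have hΦval : ∀ e : H, Φ e + τ • G (Φ e) = u - (σ - τ) • G e := fun e =>
      hTinv_eq (u - (σ - τ) • G e)
    have hcontr : ∀ e₁ e₂ : H, ‖Φ e₁ - Φ e₂‖ ≤ (1/2) * ‖e₁ - e₂‖ := by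
      intro e₁ e₂
      have h1 : c * ‖Φ e₁ - Φ e₂‖ ≤ ‖(Φ e₁ + τ • G (Φ e₁)) - (Φ e₂ + τ • G (Φ e₂))‖ :=
        hexp τ hτ _ _
      rw [hΦval e₁, hΦval e₂] at h1
      have h2 : (u - (σ-τ) • G e₁) - (u - (σ-τ) • G e₂) = (σ-τ) • (G e₂ - G e₁) := by
        rw [smul_sub]; abel
      rw [h2, norm_smul, Real.norm_eq_abs] at h1
      have h4 : ‖G e₂ - G e₁‖ ≤ L * ‖e₁ - e₂‖ := by
        rw [norm_sub_rev]; exact hGlip e₁ e₂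
      have h5 : c * ‖Φ e₁ - Φ e₂‖ ≤ δ * (L * ‖e₁ - e₂‖) :=
        h1.trans (mul_le_mul hdist h4 (norm_nonneg _) hδpos.le)
      have h6 : δ * L = c / 2 := by
        rw [hδdef]; field_simp
      have h7 : c * ‖Φ e₁ - Φ e₂‖ ≤ c * ((1/2) * ‖e₁ - e₂‖) := by
        rw [← mul_assoc] at h5
        rw [h6] at h5
        linarith [h5]
      exact (mul_le_mul_iff_right₀ hcpos).1 h7
    have hlip : LipschitzWith (1/2 : NNReal) Φ :=
      LipschitzWith.of_dist_le_mul (fun e₁ e₂ => by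
        rw [dist_eq_norm, dist_eq_norm]
        have : ((1/2 : NNReal) : ℝ) = 1/2 := by norm_num
        rw [this]
        exact hcontr e₁ e₂)
    have hCW : ContractingWith (1/2 : NNReal) Φ :=
      ⟨by rw [← NNReal.coe_lt_coe]; norm_num, hlip⟩
    set e : H := ContractingWith.fixedPoint Φ hCW with hedef
    have he : Φ e = e := hCW.fixedPoint_isFixedPt
    refine ⟨e, ?_⟩
    show e + σ • G e = u
    have h8 : e + τ • G e = u - (σ - τ) • G e := by
      have h8' := hΦval e
      rwa [he] at h8'
    have h9 : σ • G e = τ • G e + (σ - τ) • G e := by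
      rw [← add_smul]; congr 1; ring
    rw [h9, ← add_assoc, h8]
    abel
  -- induction along the homotopy
  have main : ∀ n : ℕ, ∀ τ ∈ Set.Icc (0:ℝ) 1, τ ≤ n * δ →
      Function.Surjective (fun e : H => e + τ • G e) := by
    intro n
    induction n with
    | zero =>
        intro τ hτ hle
        have hτ0 : τ = 0 := le_antisymm (by simpa using hle) hτ.1
        subst hτ0
        intro u
        exact ⟨u, by simp⟩
    | succ n ih =>
        intro τ hτ hle
        set τ' : ℝ := max (τ - δ) 0 with hτ'def
        have hτ'Icc : τ' ∈ Set.Icc (0:ℝ) 1 :=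
          ⟨le_max_right _ _, max_le (by linarith [hτ.2, hδpos]) zero_le_one⟩
        have hτ'le : τ' ≤ n * δ := by
          apply max_le
          · push_cast at hle
            linarith
          · positivity
        have hτ'leτ : τ' ≤ τ := max_le (by linarith [hδpos]) hτ.1
        have hdist : |τ - τ'| ≤ δ := by
          rw [abs_of_nonneg (by linarith)]
          have : τ - δ ≤ τ' := le_max_left _ _
          linarith
        exact step τ' hτ'Icc τ hτ hdist (ih τ' hτ'Icc hτ'le)
  have hsurj1 : Function.Surjective (fun e : H => e + (1:ℝ) • G e) := by
    obtain ⟨n, hn⟩ := exists_nat_ge (1/δ)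
    refine main n 1 ⟨zero_le_one, le_refl 1⟩ ?_
    rw [div_le_iff₀ hδpos] at hn
    linarith
  have hinj1 : ∀ e₁ e₂ : H, e₁ + (1:ℝ) • G e₁ = e₂ + (1:ℝ) • G e₂ → e₁ = e₂ := by
    intro e₁ e₂ hEq
    have h1 := hexp 1 ⟨zero_le_one, le_refl 1⟩ e₁ e₂
    rw [hEq, sub_self, norm_zero] at h1
    have h2 : ‖e₁ - e₂‖ ≤ 0 := by nlinarith [norm_nonneg (e₁ - e₂)]
    exact sub_eq_zero.1 (norm_le_zero_iff.1 h2)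
  constructor
  · intro u
    obtain ⟨e, he⟩ := hsurj1 u
    have he' : e + H₂ (H₁ e) = u := by
      have : e + (1:ℝ) • G e = u := he
      rwa [one_smul] at this
    refine ⟨(e, H₁ e), ⟨eq_sub_of_add_eq he', rfl⟩, ?_⟩
    rintro ⟨q1, q2⟩ ⟨hq1, hq2⟩
    simp only at hq1 hq2
    have hq : q1 + (1:ℝ) • G q1 = e + (1:ℝ) • G e := by
      rw [one_smul, one_smul]
      show q1 + H₂ (H₁ q1) = e + H₂ (H₁ e)
      rw [← hq2, hq1, he']
      abel
    have hq1e : q1 = e := hinj1 _ _ hq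
    have hq2e : q2 = H₁ e := by rw [hq2, hq1e]
    rw [Prod.ext_iff]
    exact ⟨hq1e, hq2e⟩
  · refine ⟨rmin⁻¹, ?_⟩
    intro u₁ e₁ y₁ u₂ e₂ y₂ he₁ hy₁ he₂ hy₂
    have h1 := hstar 1 ⟨one_pos, le_refl 1⟩ e₁ e₂
    rw [one_smul] at h1
    have heq : (e₁ - e₂) + (G e₁ - G e₂) = u₁ - u₂ := by
      show (e₁ - e₂) + (H₂ (H₁ e₁) - H₂ (H₁ e₂)) = u₁ - u₂
      rw [← hy₁, ← hy₂, he₁, he₂]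
      abel
    rw [heq, ← hy₁, ← hy₂] at h1
    rw [inv_mul_eq_div, le_div_iff₀ hrmin]
    linarith [h1]
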